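/- Let N ≥ 1, μ ∈ ℝ^N, and Σ a positive definite N×N real matrix, and set λ = −(Γ(N/2 + 2) / √(det(2πΣ)))^{2/(2+N)}. Then ∫_{ℝ^N} max(−λ − (1/2)(t−μ)ᵀΣ⁻¹(t−μ), 0) dt = 1. -/

import Mathlib

open Real Matrix
open scoped MatrixOrder

open MeasureTheory Set Metric in
private lemma radial_integral (M : ℕ) (a : ℝ) (ha : 0 < a) :
    (∫ y in Ioi (0:ℝ), y ^ M * max (a - (1/2) * y^2) 0)
      = a * (Real.sqrt (2*a)) ^ (M+1) / (M+1) - (Real.sqrt (2*a)) ^ (M+3) / (2*(M+3)) := by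
  set R := Real.sqrt (2*a) with hRdef
  have hR : 0 < R := Real.sqrt_pos.mpr (by linarith)
  have hR2 : R^2 = 2*a := Real.sq_sqrt (by linarith)
  have hcong : ∀ y ∈ Ioi (0:ℝ), y ^ M * max (a - (1/2) * y^2) 0
      = (Ioc (0:ℝ) R).indicator (fun y => y ^ M * (a - (1/2) * y^2)) y := by
    intro y hy
    by_cases hyR : y ≤ R
    · rw [indicator_of_mem (mem_Ioc.mpr ⟨mem_Ioi.mp hy, hyR⟩)]
      congr 1
      rw [max_eq_left]
      nlinarith [mem_Ioi.mp hy]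
    · rw [indicator_of_notMem (fun h => hyR h.2)]
      push_neg at hyR
      rw [max_eq_right (by nlinarith), mul_zero]
  rw [setIntegral_congr_fun measurableSet_Ioi hcong, integral_indicator measurableSet_Ioc,
    Measure.restrict_restrict measurableSet_Ioc, inter_eq_left.mpr Ioc_subset_Ioi_self,
    ← intervalIntegral.integral_of_le hR.le]
  have expand : ∀ y : ℝ, y ^ M * (a - (1/2) * y^2) = a * y ^ M - y ^ (M+2) / 2 := by
    intro y; ring
  simp_rw [expand]
  rw [intervalIntegral.integral_sub ((intervalIntegral.intervalIntegrable_pow _).const_mul _)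
      ((intervalIntegral.intervalIntegrable_pow _).div_const _),
    intervalIntegral.integral_const_mul, intervalIntegral.integral_div,
    integral_pow, integral_pow]
  have h1 : ((M:ℝ)+1) ≠ 0 := by positivity
  have h3 : ((M:ℝ)+3) ≠ 0 := by positivity
  push_cast
  field_simp
  ring

private lemma final_algebra (N M : ℕ) (hNM : N = M + 1) (a dC : ℝ) (ha : 0 < a) (hdC : 0 < dC)
    (hA : a ^ ((N:ℝ)/2 + 1) = Real.Gamma ((N:ℝ)/2+2) / Real.sqrt ((2*π)^N * dC)) :
    Real.sqrt dC * ((N:ℝ) * (Real.sqrt π ^ N / Real.Gamma ((N:ℝ)/2+1)) *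
      (a * (Real.sqrt (2*a)) ^ (M+1) / (M+1) - (Real.sqrt (2*a)) ^ (M+3) / (2*(M+3)))) = 1 := by
  have hpi : (0:ℝ) < π := Real.pi_pos
  have hRN : (Real.sqrt (2*a)) ^ N = 2 ^ ((N:ℝ)/2) * a ^ ((N:ℝ)/2) := by
    rw [Real.sqrt_eq_rpow, ← Real.rpow_natCast ((2*a) ^ ((1:ℝ)/2)) N, ← Real.rpow_mul (by linarith),
      ← Real.mul_rpow (by norm_num) ha.le]
    ring_nf
  have hpiN : Real.sqrt π ^ N = π ^ ((N:ℝ)/2) := by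
    rw [Real.sqrt_eq_rpow, ← Real.rpow_natCast (π ^ ((1:ℝ)/2)) N, ← Real.rpow_mul hpi.le]
    ring_nf
  have hsq : Real.sqrt ((2*π)^N * dC) = 2 ^ ((N:ℝ)/2) * π ^ ((N:ℝ)/2) * Real.sqrt dC := by
    rw [Real.sqrt_mul (by positivity)]
    congr 1
    rw [Real.sqrt_eq_rpow, ← Real.rpow_natCast (2*π) N, ← Real.rpow_mul (by positivity),
      Real.mul_rpow (by norm_num) hpi.le]
    ring_nf
  have hG1 : 0 < Real.Gamma ((N:ℝ)/2+1) := Real.Gamma_pos_of_pos (by positivity)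
  have hG2 : Real.Gamma ((N:ℝ)/2+2) = ((N:ℝ)/2+1) * Real.Gamma ((N:ℝ)/2+1) := by
    have := Real.Gamma_add_one (show ((N:ℝ)/2+1) ≠ 0 by positivity)
    rw [show (N:ℝ)/2+1+1 = (N:ℝ)/2+2 by ring] at this
    exact this
  have hb : (0:ℝ) < a ^ ((N:ℝ)/2) := Real.rpow_pos_of_pos ha _
  have h2r : (0:ℝ) < (2:ℝ) ^ ((N:ℝ)/2) := Real.rpow_pos_of_pos (by norm_num) _
  have hpr : (0:ℝ) < π ^ ((N:ℝ)/2) := Real.rpow_pos_of_pos hpi _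
  have hsd : (0:ℝ) < Real.sqrt dC := Real.sqrt_pos.mpr hdC
  have haa : a ^ ((N:ℝ)/2 + 1) = a ^ ((N:ℝ)/2) * a := by
    rw [Real.rpow_add ha, Real.rpow_one]
  have hkey : ((N:ℝ)/2+1) * Real.Gamma ((N:ℝ)/2+1) =
      a ^ ((N:ℝ)/2) * a * (2 ^ ((N:ℝ)/2) * π ^ ((N:ℝ)/2) * Real.sqrt dC) := by
    rw [← hG2, ← haa, hA, hsq, div_mul_cancel₀]
    positivity
  have hRM1 : (Real.sqrt (2*a)) ^ (M+1) = 2 ^ ((N:ℝ)/2) * a ^ ((N:ℝ)/2) := by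
    rw [← hNM]; exact hRN
  have hRM3 : (Real.sqrt (2*a)) ^ (M+3) = 2 ^ ((N:ℝ)/2) * a ^ ((N:ℝ)/2) * (2*a) := by
    have : M + 3 = N + 2 := by omega
    rw [this, pow_add, hRN, Real.sq_sqrt (by linarith)]
  rw [hRM1, hRM3, hpiN,
    show ((M:ℝ)+1) = (N:ℝ) by rw [hNM]; push_cast; ring,
    show ((M:ℝ)+3) = (N:ℝ)+2 by rw [hNM]; push_cast; ring]
  have hN0 : (0:ℝ) < (N:ℝ) := by rw [hNM]; positivity
  have hGval : Real.Gamma ((N:ℝ)/2+1) =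
      2 * (a ^ ((N:ℝ)/2) * a * (2 ^ ((N:ℝ)/2) * π ^ ((N:ℝ)/2) * Real.sqrt dC)) / ((N:ℝ)+2) := by
    rw [← hkey]; field_simp
  rw [hGval]
  field_simp
  ring

/-- The multivariate truncated paraboloid density normalizes to 1 with
`λ = −(Γ(N/2 + 2) / √(det(2πΣ)))^(2/(2+N))`. -/
theorem stmt_11 (N : ℕ) (hN : 1 ≤ N) (μ : Fin N → ℝ)
    (C : Matrix (Fin N) (Fin N) ℝ) (hC : C.PosDef)
    (lam : ℝ)
    (hlam : lam = -(Real.Gamma ((N : ℝ) / 2 + 2) /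
      Real.sqrt (((2 * Real.pi) • C).det)) ^ (2 / ((2 : ℝ) + N))) :
    (∫ t : Fin N → ℝ,
      max (-lam - (1 / 2) * ((t - μ) ⬝ᵥ C⁻¹.mulVec (t - μ))) 0) = 1 := by
  classical
  open MeasureTheory Set Metric in
  -- basic positivity facts
  have hpi : (0:ℝ) < π := Real.pi_pos
  have hdetC : 0 < C.det := hC.det_pos
  have hdet2 : ((2 * π) • C).det = (2*π)^N * C.det := by
    rw [Matrix.det_smul, Fintype.card_fin]
  have hK : 0 < Real.Gamma ((N : ℝ) / 2 + 2) / Real.sqrt (((2 * Real.pi) • C).det) := by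
    apply div_pos (Real.Gamma_pos_of_pos (by positivity))
    rw [hdet2]; positivity
  set K := Real.Gamma ((N : ℝ) / 2 + 2) / Real.sqrt (((2 * Real.pi) • C).det) with hKdef
  set a : ℝ := K ^ (2 / ((2 : ℝ) + N)) with hadef
  have ha : 0 < a := Real.rpow_pos_of_pos hK _
  have hlam' : -lam = a := by rw [hlam]; ring
  have hA : a ^ ((N:ℝ)/2 + 1) = Real.Gamma ((N:ℝ)/2+2) / Real.sqrt ((2*π)^N * C.det) := by
    have hne : ((2:ℝ) + N) ≠ 0 := by positivity
    rw [hadef, ← Real.rpow_mul hK.le,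
      show (2/((2:ℝ)+N))*((N:ℝ)/2+1) = 1 by field_simp; ring, Real.rpow_one, hKdef, hdet2]
  -- matrix square root
  set B := CFC.sqrt C with hB
  have hBB : B * B = C := CFC.sqrt_mul_sqrt_self C hC.posSemidef.nonneg
  have hBsymm : Bᵀ = B := by
    have := (CFC.sqrt_nonneg C).posSemidef.1
    simpa using this.eq
  have h1 : B.det * B.det = C.det := by rw [← Matrix.det_mul, hBB]
  have hdetB : B.det ≠ 0 := by intro h; rw [h] at h1; nlinarith
  have habs : |B.det| = Real.sqrt C.det := by
    rw [← h1, ← pow_two, Real.sqrt_sq_eq_abs]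
  have hCsymm : Cᵀ = C := by simpa using hC.1.eq
  have hkeyM : B * C⁻¹ * B = 1 := by
    rw [← hBB, Matrix.mul_inv_rev]
    rw [Matrix.mul_assoc, Matrix.nonsing_inv_mul_cancel_right _ _ (isUnit_iff_ne_zero.mpr hdetB),
      Matrix.mul_nonsing_inv _ (isUnit_iff_ne_zero.mpr hdetB)]
  have hquad : ∀ x : Fin N → ℝ, (B.mulVec x) ⬝ᵥ C⁻¹.mulVec (B.mulVec x) = x ⬝ᵥ x := by
    intro x
    rw [Matrix.mulVec_mulVec, Matrix.dotProduct_mulVec, ← Matrix.mulVec_transpose,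
      Matrix.mulVec_mulVec, Matrix.transpose_mul, Matrix.transpose_nonsing_inv, hCsymm,
      hBsymm, hkeyM, Matrix.one_mulVec]
  -- the integrand as a function
  set f : (Fin N → ℝ) → ℝ := fun t => max (a - (1/2) * (t ⬝ᵥ C⁻¹.mulVec t)) 0 with hf
  have hcont : Continuous f := by
    apply Continuous.max _ continuous_const
    apply Continuous.sub continuous_const
    apply Continuous.mul continuous_const
    unfold dotProduct Matrix.mulVec
    exact continuous_finset_sum _ fun i _ => (continuous_apply i).mul
      (continuous_finset_sum _ fun j _ => continuous_const.mul (continuous_apply j))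
  -- translation invariance
  have htrans : (∫ t : Fin N → ℝ,
      max (-lam - (1 / 2) * ((t - μ) ⬝ᵥ C⁻¹.mulVec (t - μ))) 0) = ∫ t, f t := by
    rw [← integral_sub_right_eq_self f μ]
    congr 1
    ext t
    rw [hf, hlam']
  -- change of variables via B
  have hmap : Measure.map (Matrix.toLin' B) volume
      = ENNReal.ofReal |B.det⁻¹| • volume :=
    Real.map_matrix_volume_pi_eq_smul_volume_pi hdetB
  have step1 : ∫ x, f (B.mulVec x) = |B.det|⁻¹ * ∫ t, f t := by
    have h1 : ∫ x, f (B.mulVec x) = ∫ y, f y ∂(Measure.map (Matrix.toLin' B) volume) := by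
      rw [integral_map (by fun_prop) hcont.aestronglyMeasurable]
      simp [Matrix.toLin'_apply]
    rw [h1, hmap, integral_smul_measure, ENNReal.toReal_ofReal (abs_nonneg _),
      smul_eq_mul, abs_inv]
  have step2 : ∫ t, f t = |B.det| * ∫ x, f (B.mulVec x) := by
    rw [step1, ← mul_assoc, mul_inv_cancel₀ (by simpa using hdetB), one_mul]
  -- pass to Euclidean space
  have step3 : ∫ x : Fin N → ℝ, f (B.mulVec x)
      = ∫ x : EuclideanSpace ℝ (Fin N), max (a - (1/2) * ‖x‖^2) 0 := by
    rw [← (EuclideanSpace.volume_preserving_symm_measurableEquiv_toLp (Fin N)).integral_comp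
      (MeasurableEquiv.toLp 2 (Fin N → ℝ)).symm.measurableEmbedding (fun y => f (B.mulVec y))]
    congr 1
    ext x
    rw [hf]
    simp only [hquad]
    congr 2
    rw [EuclideanSpace.norm_eq, Real.sq_sqrt (by positivity)]
    simp [dotProduct, pow_two]
  -- polar coordinates
  haveI : Nonempty (Fin N) := Fin.pos_iff_nonempty.mp hN
  have hfin : Module.finrank ℝ (EuclideanSpace ℝ (Fin N)) = N := by
    simp [finrank_euclideanSpace]
  have step4 : (∫ x : EuclideanSpace ℝ (Fin N), max (a - (1/2) * ‖x‖^2) 0)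
      = N * (Real.sqrt π ^ N / Real.Gamma ((N:ℝ)/2 + 1)) *
        ∫ y in Ioi (0:ℝ), y ^ (N - 1) * max (a - (1/2) * y^2) 0 := by
    rw [integral_fun_norm_addHaar (volume : Measure (EuclideanSpace ℝ (Fin N)))
      (fun r => max (a - (1/2) * r^2) 0)]
    rw [hfin, measureReal_def, EuclideanSpace.volume_ball]
    simp only [Fintype.card_fin, nsmul_eq_mul, smul_eq_mul]
    rw [ENNReal.ofReal_one, one_pow, one_mul, ENNReal.toReal_ofReal (by positivity)]
    ring
  -- radial integral
  set M := N - 1 with hM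
  have hNM : N = M + 1 := by omega
  have step5 : (∫ y in Ioi (0:ℝ), y ^ (N - 1) * max (a - (1/2) * y^2) 0)
      = a * (Real.sqrt (2*a)) ^ (M+1) / (M+1) - (Real.sqrt (2*a)) ^ (M+3) / (2*(M+3)) :=
    radial_integral M a ha
  rw [htrans, step2, step3, step4, step5, habs]
  exact final_algebra N M hNM a C.det ha hdetC hA
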